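/- Let a ≥ 0, r ∈ ℕ₀, and fix x ∈ [0,∞). Define μ*_{n,r}^a(x) = Σ_{k=0}^{∞} W_{n,k}^a(x)·(k/n − x)^r. Then μ*_{n,r}^a(x) = O(n^{−⌊(r+1)/2⌋}) as n → ∞; that is, there exist constants C > 0 and N ∈ ℕ such that |μ*_{n,r}^a(x)| ≤ C·n^{−⌊(r+1)/2⌋} for all n ≥ N. -/

import Mathlib

open MeasureTheory Filter

noncomputable section

/-- Rising factorial `(n)_i = n(n+1)⋯(n+i-1)`, with `(n)_0 = 1`. -/
def risingFac (n : ℕ) : ℕ → ℝ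
  | 0 => 1
  | i + 1 => risingFac n i * ((n : ℝ) + i)

/-- `P_k(n,a) = Σ_{i=0}^{k} C(k,i) (n)_i a^(k-i)`. -/
def Pba (k n : ℕ) (a : ℝ) : ℝ :=
  ∑ i ∈ Finset.range (k + 1), (k.choose i : ℝ) * risingFac n i * a ^ (k - i)

/-- Generalized Baskakov basis function `W_{n,k}^a(x)`. -/
def Wgb (a : ℝ) (n k : ℕ) (x : ℝ) : ℝ :=
  Real.exp (-(a * x) / (1 + x)) * (Pba k n a / (Nat.factorial k : ℝ)) * x ^ k /
    (1 + x) ^ (n + k)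

/-- Generalized Baskakov–Kantorovich operator `K_n^a(f;x)`. -/
def Kgb (a : ℝ) (n : ℕ) (f : ℝ → ℝ) (x : ℝ) : ℝ :=
  ((n : ℝ) + 1) * ∑' k : ℕ,
    Wgb a n k x * ∫ t in ((k : ℝ) / ((n : ℝ) + 1))..(((k : ℝ) + 1) / ((n : ℝ) + 1)), f t


/-- The moment `μ*_{n,r}^a(x) = Σ_k W_{n,k}^a(x)·(k/n − x)^r`. -/
def muStarMoment (a : ℝ) (n r : ℕ) (x : ℝ) : ℝ :=
  ∑' k : ℕ, Wgb a n k x * ((k : ℝ) / (n : ℝ) - x) ^ r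

/-! ### Auxiliary development

We show that `W_{n+1,·}` is the convolution of `W_{n,·}` with a geometric
distribution, that `W_{0,·}` is a Poisson distribution, and deduce a
recurrence for the central moments which yields the required bound. -/

lemma risingFac_nonneg (n i : ℕ) : 0 ≤ risingFac n i := by
  induction i with
  | zero => norm_num [risingFac]
  | succ i ih => rw [risingFac]; positivity

lemma risingFac_zero_left (i : ℕ) : risingFac 0 (i + 1) = 0 := by
  induction i with
  | zero => simp [risingFac]
  | succ i ih => rw [risingFac, ih, zero_mul]

lemma risingFac_shift (n i : ℕ) : risingFac n (i + 1) = (n : ℝ) * risingFac (n + 1) i := by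
  induction i with
  | zero => simp [risingFac]
  | succ i ih =>
    rw [risingFac, ih, risingFac]
    push_cast
    ring

lemma risingFac_pascal (n i : ℕ) :
    risingFac (n + 1) (i + 1) = risingFac n (i + 1) + ((i : ℝ) + 1) * risingFac (n + 1) i := by
  rw [risingFac, risingFac_shift]
  push_cast
  ring

/-- `P_k(n,a)/k!` in explicit Cauchy-product form. -/
lemma Pba_div_factorial (a : ℝ) (n k : ℕ) :
    Pba k n a / (k.factorial : ℝ) =
      ∑ i ∈ Finset.range (k + 1),
        risingFac n i / (i.factorial : ℝ) * (a ^ (k - i) / ((k - i).factorial : ℝ)) := by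
  rw [Pba, Finset.sum_div]
  refine Finset.sum_congr rfl fun i hi => ?_
  have hik : i ≤ k := Nat.lt_succ_iff.mp (Finset.mem_range.mp hi)
  have h := Nat.choose_mul_factorial_mul_factorial hik
  have hkf : (k.factorial : ℝ) ≠ 0 := Nat.cast_ne_zero.mpr k.factorial_ne_zero
  have hif : (i.factorial : ℝ) ≠ 0 := Nat.cast_ne_zero.mpr i.factorial_ne_zero
  have hkif : ((k - i).factorial : ℝ) ≠ 0 := Nat.cast_ne_zero.mpr (k - i).factorial_ne_zero
  have hcast : (k.choose i : ℝ) * i.factorial * (k - i).factorial = k.factorial := by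
    exact_mod_cast congrArg (Nat.cast : ℕ → ℝ) h
  field_simp
  linear_combination risingFac n i * a ^ (k - i) * hcast

/-- The normalized coefficients `c^{(n)}_k = P_k(n,a)/k!`. -/
def cc (a : ℝ) (n k : ℕ) : ℝ := Pba k n a / (k.factorial : ℝ)

lemma cc_zero (a : ℝ) (n : ℕ) : cc a n 0 = 1 := by
  simp [cc, Pba, risingFac]

lemma cc_expand (a : ℝ) (n k : ℕ) : cc a n k =
    ∑ i ∈ Finset.range (k + 1),
      risingFac n i / (i.factorial : ℝ) * (a ^ (k - i) / ((k - i).factorial : ℝ)) :=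
  Pba_div_factorial a n k

lemma cc_peel (a : ℝ) (n k : ℕ) : cc a n (k + 1) =
    (∑ i ∈ Finset.range (k + 1),
      risingFac n (i + 1) / ((i + 1).factorial : ℝ) * (a ^ (k - i) / ((k - i).factorial : ℝ)))
      + a ^ (k + 1) / ((k + 1).factorial : ℝ) := by
  rw [cc_expand, Finset.sum_range_succ']
  simp [Nat.succ_sub_succ, risingFac]

lemma cc_succ_succ (a : ℝ) (n k : ℕ) :
    cc a (n + 1) (k + 1) = cc a (n + 1) k + cc a n (k + 1) := by
  rw [cc_peel, cc_peel, cc_expand a (n+1) k]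
  have key : ∀ i ∈ Finset.range (k + 1),
      risingFac (n+1) (i + 1) / ((i + 1).factorial : ℝ) * (a ^ (k - i) / ((k - i).factorial : ℝ))
      = risingFac (n+1) i / (i.factorial : ℝ) * (a ^ (k - i) / ((k - i).factorial : ℝ))
        + risingFac n (i + 1) / ((i + 1).factorial : ℝ)
          * (a ^ (k - i) / ((k - i).factorial : ℝ)) := by
    intro i _
    rw [risingFac_pascal]
    have h1 : ((i+1).factorial : ℝ) = ((i:ℝ) + 1) * (i.factorial : ℝ) := by
      rw [Nat.factorial_succ]; push_cast; ring
    have h2 : ((i:ℝ) + 1) ≠ 0 := by positivity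
    have h3 : (i.factorial : ℝ) ≠ 0 := Nat.cast_ne_zero.mpr i.factorial_ne_zero
    have h4 : ((k-i).factorial : ℝ) ≠ 0 := Nat.cast_ne_zero.mpr (k-i).factorial_ne_zero
    field_simp [h1]
    simp only [Nat.factorial_succ, Nat.cast_mul, Nat.cast_add, Nat.cast_one]
    ring
  rw [Finset.sum_congr rfl key, Finset.sum_add_distrib]
  ring

/-- Convolution identity: `cc (n+1) k = ∑_{j ≤ k} cc n j`. -/
lemma cc_conv (a : ℝ) (n k : ℕ) :
    cc a (n + 1) k = ∑ j ∈ Finset.range (k + 1), cc a n j := by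
  induction k with
  | zero => simp [cc_zero]
  | succ k ih => rw [Finset.sum_range_succ, ← ih, cc_succ_succ]

lemma cc_nonneg (a : ℝ) (ha : 0 ≤ a) (n k : ℕ) : 0 ≤ cc a n k := by
  rw [cc_expand]
  refine Finset.sum_nonneg fun i _ => ?_
  have h1 : (0:ℝ) ≤ risingFac n i := risingFac_nonneg n i
  have h2 : (0:ℝ) ≤ a ^ (k - i) := pow_nonneg ha _
  have h3 : (0:ℝ) ≤ (i.factorial : ℝ) := Nat.cast_nonneg _
  have h4 : (0:ℝ) ≤ ((k - i).factorial : ℝ) := Nat.cast_nonneg _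
  exact mul_nonneg (div_nonneg h1 h3) (div_nonneg h2 h4)

lemma cc_poisson (a : ℝ) (k : ℕ) : cc a 0 k = a ^ k / (k.factorial : ℝ) := by
  rw [cc_expand]
  rw [Finset.sum_eq_single 0]
  · simp [risingFac]
  · intro i hi hne
    obtain ⟨j, rfl⟩ := Nat.exists_eq_succ_of_ne_zero hne
    simp [risingFac_zero_left]
  · intro h; simp at h

/-- Geometric weights `g_m = (1+x)⁻¹ (x/(1+x))^m`. -/
def gg (x : ℝ) (m : ℕ) : ℝ := (1 + x)⁻¹ * (x / (1 + x)) ^ m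

section W
variable {a x : ℝ}

lemma one_add_pos (hx : 0 ≤ x) : (0:ℝ) < 1 + x := by linarith

lemma u_nonneg (hx : 0 ≤ x) : 0 ≤ x / (1 + x) :=
  div_nonneg hx (one_add_pos hx).le

lemma u_lt_one (hx : 0 ≤ x) : x / (1 + x) < 1 :=
  (div_lt_one (one_add_pos hx)).mpr (by linarith)

lemma Wgb_eq (hx : 0 ≤ x) (n k : ℕ) :
    Wgb a n k x = Real.exp (-(a * x) / (1 + x)) * cc a n k *
      (x / (1 + x)) ^ k * ((1 + x)⁻¹) ^ n := by
  rw [Wgb, cc, pow_add, div_pow, inv_pow]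
  ring

lemma Wgb_nonneg (ha : 0 ≤ a) (hx : 0 ≤ x) (n k : ℕ) : 0 ≤ Wgb a n k x := by
  rw [Wgb_eq hx]
  have := cc_nonneg a ha n k
  have := u_nonneg hx
  have := (one_add_pos hx).le
  positivity

lemma gg_nonneg (hx : 0 ≤ x) (m : ℕ) : 0 ≤ gg x m := by
  have := u_nonneg hx
  have := (one_add_pos hx).le
  rw [gg]; positivity

lemma Wgb_conv (hx : 0 ≤ x) (n k : ℕ) :
    Wgb a (n + 1) k x = ∑ j ∈ Finset.range (k + 1), Wgb a n j x * gg x (k - j) := by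
  have key : ∀ j ∈ Finset.range (k + 1), Wgb a n j x * gg x (k - j)
      = cc a n j * (Real.exp (-(a * x) / (1 + x)) * (x / (1 + x)) ^ k
          * ((1 + x)⁻¹) ^ (n + 1)) := by
    intro j hj
    have hjk : j ≤ k := Nat.lt_succ_iff.mp (Finset.mem_range.mp hj)
    have hpow : (x / (1 + x)) ^ j * (x / (1 + x)) ^ (k - j) = (x / (1 + x)) ^ k := by
      rw [← pow_add]; congr 1; omega
    rw [Wgb_eq hx, gg]
    linear_combination (Real.exp (-(a * x) / (1 + x)) * cc a n j * ((1 + x)⁻¹) ^ (n + 1)) * hpow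
  rw [Finset.sum_congr rfl key, ← Finset.sum_mul, ← cc_conv, Wgb_eq hx]
  ring

lemma Wgb_poisson (hx : 0 ≤ x) (k : ℕ) :
    Wgb a 0 k x = Real.exp (-(a * x) / (1 + x)) * (a * x / (1 + x)) ^ k /
      (k.factorial : ℝ) := by
  rw [Wgb_eq hx, cc_poisson, pow_zero, mul_div_assoc a, mul_pow]
  ring

/-- Summable geometric with polynomial weight. -/
lemma summable_gg_pow (hx : 0 ≤ x) (s : ℕ) :
    Summable (fun m : ℕ => gg x m * (m : ℝ) ^ s) := by
  have hu : ‖x / (1 + x)‖ < 1 := by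
    rw [Real.norm_eq_abs, abs_of_nonneg (u_nonneg hx)]; exact u_lt_one hx
  have h := (summable_pow_mul_geometric_of_norm_lt_one s hu).mul_left (1 + x)⁻¹
  exact h.congr fun m => by rw [gg]; ring

lemma cast_le_two_pow (k : ℕ) : (k : ℝ) ≤ 2 ^ k := by
  exact_mod_cast (Nat.lt_two_pow_self (n := k)).le

/-- Summability of the Baskakov weights against polynomial weights. -/
lemma summable_W_pow (ha : 0 ≤ a) (hx : 0 ≤ x) (n s : ℕ) :
    Summable (fun k : ℕ => Wgb a n k x * (k : ℝ) ^ s) := by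
  induction n generalizing s with
  | zero =>
    set y : ℝ := a * x / (1 + x) with hy
    have hy0 : 0 ≤ y := by
      have := one_add_pos hx
      positivity
    set E : ℝ := Real.exp (-(a * x) / (1 + x)) with hE
    have hE0 : 0 ≤ E := (Real.exp_pos _).le
    refine Summable.of_nonneg_of_le (fun k => ?_) (fun k => ?_)
      ((Real.summable_pow_div_factorial (2 ^ s * y)).mul_left E)
    · have := Wgb_nonneg ha hx 0 k
      positivity
    · rw [Wgb_poisson hx]
      have h1 : (k : ℝ) ^ s ≤ ((2:ℝ) ^ s) ^ k := by
        calc (k : ℝ) ^ s ≤ ((2:ℝ) ^ k) ^ s :=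
              pow_le_pow_left₀ (Nat.cast_nonneg k) (cast_le_two_pow k) s
        _ = ((2:ℝ) ^ s) ^ k := by rw [← pow_mul, mul_comm, pow_mul]
      have h2 : y ^ k * (k : ℝ) ^ s ≤ (2 ^ s * y) ^ k := by
        rw [mul_pow]
        have := pow_nonneg hy0 k
        nlinarith [pow_nonneg (pow_nonneg (by norm_num : (0:ℝ) ≤ 2) s) k,
          pow_nonneg (Nat.cast_nonneg (α := ℝ) k) s]
      have hf : (0:ℝ) < (k.factorial : ℝ) := by positivity
      calc E * y ^ k / (k.factorial : ℝ) * (k : ℝ) ^ s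
          = E * (y ^ k * (k : ℝ) ^ s) / (k.factorial : ℝ) := by ring
        _ ≤ E * (2 ^ s * y) ^ k / (k.factorial : ℝ) := by
            have := mul_le_mul_of_nonneg_left h2 hE0
            exact div_le_div_of_nonneg_right this hf.le
        _ = E * ((2 ^ s * y) ^ k / (k.factorial : ℝ)) := by ring
  | succ n ih =>
    have hfun : ∀ k : ℕ, Wgb a (n+1) k x * (k : ℝ) ^ s
        = ∑ t ∈ Finset.range (s + 1), ∑ j ∈ Finset.range (k + 1),
            (Wgb a n j x * (j : ℝ) ^ t) *
              (gg x (k - j) * ((k - j : ℕ) : ℝ) ^ (s - t) * (s.choose t : ℝ)) := by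
      intro k
      rw [Wgb_conv hx, Finset.sum_mul, Finset.sum_comm]
      refine Finset.sum_congr rfl fun j hj => ?_
      have hjk : j ≤ k := Nat.lt_succ_iff.mp (Finset.mem_range.mp hj)
      have hcast : (k : ℝ) = (j : ℝ) + ((k - j : ℕ) : ℝ) := by
        push_cast [Nat.cast_sub hjk]; ring
      rw [hcast, add_pow]
      rw [Finset.mul_sum]
      refine Finset.sum_congr rfl fun t ht => ?_
      ring
    refine Summable.congr ?_ (fun k => (hfun k).symm)
    apply summable_sum
    intro t ht
    have hf : Summable fun j => ‖Wgb a n j x * (j : ℝ) ^ t‖ := by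
      refine (ih t).abs.congr fun j => ?_
      rw [Real.norm_eq_abs]
    have hg : Summable fun m => ‖gg x m * (m : ℝ) ^ (s - t) * (s.choose t : ℝ)‖ := by
      refine (((summable_gg_pow hx (s - t)).mul_right (s.choose t : ℝ)).abs).congr fun m => ?_
      rw [Real.norm_eq_abs]
    exact (summable_norm_sum_mul_range_of_summable_norm hf hg).of_norm

/-- Shifted absolute summability, generic helper. -/
lemma summable_shift {W : ℕ → ℝ} (hW : ∀ k, 0 ≤ W k)
    (hS : ∀ s : ℕ, Summable fun k => W k * (k : ℝ) ^ s) (t : ℕ) (c : ℝ) :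
    Summable fun k => W k * |(k : ℝ) - c| ^ t := by
  refine Summable.of_nonneg_of_le
    (fun k => mul_nonneg (hW k) (pow_nonneg (abs_nonneg _) _)) (fun k => ?_)
    ((summable_sum (s := Finset.range (t+1))
      (fun s _ => (hS s).mul_right ((t.choose s : ℝ) * |c| ^ (t - s)))))
  have h1 : |(k : ℝ) - c| ^ t ≤ ((k : ℝ) + |c|) ^ t := by
    apply pow_le_pow_left₀ (abs_nonneg _)
    calc |(k : ℝ) - c| ≤ |(k:ℝ)| + |c| := abs_sub _ _
      _ = (k : ℝ) + |c| := by rw [abs_of_nonneg (Nat.cast_nonneg k)]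
  calc W k * |(k : ℝ) - c| ^ t ≤ W k * ((k : ℝ) + |c|) ^ t :=
        mul_le_mul_of_nonneg_left h1 (hW k)
    _ = ∑ s ∈ Finset.range (t+1), W k * (k:ℝ)^s * ((t.choose s : ℝ) * |c| ^ (t-s)) := by
        rw [add_pow, Finset.mul_sum]
        exact Finset.sum_congr rfl fun s _ => by ring

lemma norm_W_center (ha : 0 ≤ a) (hx : 0 ≤ x) (n t : ℕ) (c : ℝ) (j : ℕ) :
    ‖Wgb a n j x * ((j : ℝ) - c) ^ t‖ = Wgb a n j x * |(j : ℝ) - c| ^ t := by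
  rw [Real.norm_eq_abs, abs_mul, abs_of_nonneg (Wgb_nonneg ha hx n j), abs_pow]

lemma norm_gg_center (hx : 0 ≤ x) (t : ℕ) (c : ℝ) (m : ℕ) :
    ‖gg x m * ((m : ℝ) - c) ^ t‖ = gg x m * |(m : ℝ) - c| ^ t := by
  rw [Real.norm_eq_abs, abs_mul, abs_of_nonneg (gg_nonneg hx m), abs_pow]

lemma summable_W_center_norm (ha : 0 ≤ a) (hx : 0 ≤ x) (n t : ℕ) (c : ℝ) :
    Summable fun j => ‖Wgb a n j x * ((j : ℝ) - c) ^ t‖ :=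
  ((summable_shift (Wgb_nonneg ha hx n) (summable_W_pow ha hx n) t c).congr
    fun j => (norm_W_center ha hx n t c j).symm)

lemma summable_gg_center_norm (hx : 0 ≤ x) (t : ℕ) (c : ℝ) :
    Summable fun m => ‖gg x m * ((m : ℝ) - c) ^ t‖ :=
  ((summable_shift (gg_nonneg hx) (summable_gg_pow hx) t c).congr
    fun m => (norm_gg_center hx t c m).symm)

/-- Geometric central moments. -/
def ggamma (x : ℝ) (s : ℕ) : ℝ := ∑' m : ℕ, gg x m * ((m : ℝ) - x) ^ s

lemma one_sub_u (hx : 0 ≤ x) : 1 - x / (1 + x) = (1 + x)⁻¹ := by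
  have h := (one_add_pos hx).ne'
  field_simp
  ring

lemma ggamma_zero (hx : 0 ≤ x) : ggamma x 0 = 1 := by
  have h := (one_add_pos hx).ne'
  rw [ggamma]
  simp only [pow_zero, mul_one, gg]
  rw [tsum_mul_left, tsum_geometric_of_lt_one (u_nonneg hx) (u_lt_one hx), one_sub_u hx,
    inv_inv]
  field_simp

lemma ggamma_one (hx : 0 ≤ x) : ggamma x 1 = 0 := by
  have h := (one_add_pos hx).ne'
  have hu : ‖x / (1 + x)‖ < 1 := by
    rw [Real.norm_eq_abs, abs_of_nonneg (u_nonneg hx)]; exact u_lt_one hx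
  have hA : Summable fun m : ℕ => (1 + x)⁻¹ * ((m : ℝ) * (x / (1 + x)) ^ m) := by
    refine ((summable_pow_mul_geometric_of_norm_lt_one 1 hu).mul_left (1 + x)⁻¹).congr
      fun m => by rw [pow_one]
  have hB : Summable fun m : ℕ => x * gg x m := by
    refine (((summable_gg_pow hx 0).congr fun m => by rw [pow_zero, mul_one]).mul_left x)
  have hpt : ∀ m : ℕ, gg x m * ((m : ℝ) - x) ^ 1
      = (1 + x)⁻¹ * ((m : ℝ) * (x / (1 + x)) ^ m) - x * gg x m := by
    intro m; rw [pow_one, gg]; ring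
  have hg0 : ∑' m : ℕ, gg x m = 1 := by
    have h0 := ggamma_zero hx
    rw [ggamma] at h0
    simpa using h0
  rw [ggamma, tsum_congr hpt, hA.tsum_sub hB, tsum_mul_left,
    tsum_coe_mul_geometric_of_norm_lt_one hu, tsum_mul_left, hg0, one_sub_u hx]
  field_simp
  ring

/-- The central-type moments `∑_k W_{n,k}(x)·(k − nx)^r`. -/
def Cmom (a x : ℝ) (n r : ℕ) : ℝ := ∑' k : ℕ, Wgb a n k x * ((k : ℝ) - (n : ℝ) * x) ^ r

lemma Cmom_rec (ha : 0 ≤ a) (hx : 0 ≤ x) (n r : ℕ) :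
    Cmom a x (n + 1) r
      = ∑ t ∈ Finset.range (r + 1),
          (r.choose t : ℝ) * Cmom a x n t * ggamma x (r - t) := by
  have hpt : ∀ k : ℕ, Wgb a (n + 1) k x * ((k : ℝ) - ((n + 1 : ℕ) : ℝ) * x) ^ r
      = ∑ t ∈ Finset.range (r + 1), ∑ j ∈ Finset.range (k + 1),
          (Wgb a n j x * ((j : ℝ) - (n : ℝ) * x) ^ t) *
            (gg x (k - j) * (((k - j : ℕ) : ℝ) - x) ^ (r - t) * (r.choose t : ℝ)) := by
    intro k
    rw [Wgb_conv hx, Finset.sum_mul, Finset.sum_comm]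
    refine Finset.sum_congr rfl fun j hj => ?_
    have hjk : j ≤ k := Nat.lt_succ_iff.mp (Finset.mem_range.mp hj)
    have hcast : (k : ℝ) - ((n + 1 : ℕ) : ℝ) * x
        = ((j : ℝ) - (n : ℝ) * x) + ((((k - j : ℕ)) : ℝ) - x) := by
      push_cast [Nat.cast_sub hjk]; ring
    rw [hcast, add_pow, Finset.mul_sum]
    exact Finset.sum_congr rfl fun t ht => by ring
  have hsummand : ∀ t ∈ Finset.range (r + 1), Summable fun k =>
      ∑ j ∈ Finset.range (k + 1),
        (Wgb a n j x * ((j : ℝ) - (n : ℝ) * x) ^ t) *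
          (gg x (k - j) * (((k - j : ℕ) : ℝ) - x) ^ (r - t) * (r.choose t : ℝ)) := by
    intro t _
    have hG : Summable fun m =>
        ‖gg x m * (((m : ℕ) : ℝ) - x) ^ (r - t) * (r.choose t : ℝ)‖ := by
      refine ((summable_gg_center_norm hx (r - t) x).mul_right |(r.choose t : ℝ)|).congr
        fun m => ?_
      rw [norm_gg_center hx, Real.norm_eq_abs, abs_mul, abs_mul,
        abs_of_nonneg (gg_nonneg hx m), abs_pow]
    exact (summable_norm_sum_mul_range_of_summable_norm
      (summable_W_center_norm ha hx n t ((n : ℝ) * x)) hG).of_norm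
  rw [Cmom, tsum_congr hpt, Summable.tsum_finsetSum hsummand]
  refine Finset.sum_congr rfl fun t ht => ?_
  have hG : Summable fun m =>
      ‖gg x m * (((m : ℕ) : ℝ) - x) ^ (r - t) * (r.choose t : ℝ)‖ := by
    refine ((summable_gg_center_norm hx (r - t) x).mul_right |(r.choose t : ℝ)|).congr
      fun m => ?_
    rw [norm_gg_center hx, Real.norm_eq_abs, abs_mul, abs_mul,
      abs_of_nonneg (gg_nonneg hx m), abs_pow]
  rw [← tsum_mul_tsum_eq_tsum_sum_range_of_summable_norm
    (summable_W_center_norm ha hx n t ((n : ℝ) * x)) hG]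
  rw [tsum_mul_right, Cmom, ggamma]
  ring

lemma Cmom_diff (ha : 0 ≤ a) (hx : 0 ≤ x) (n r : ℕ) :
    Cmom a x (n + 1) r - Cmom a x n r
      = ∑ t ∈ Finset.range (r - 1),
          (r.choose t : ℝ) * Cmom a x n t * ggamma x (r - t) := by
  rw [Cmom_rec ha hx]
  match r with
  | 0 => simp [ggamma_zero hx]
  | (r' + 1) =>
    rw [Finset.sum_range_succ, Finset.sum_range_succ]
    have h1 : r' + 1 - r' = 1 := by omega
    have h2 : r' + 1 - (r' + 1) = 0 := by omega
    rw [h1, h2, ggamma_zero hx, ggamma_one hx]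
    simp only [Nat.choose_self, Nat.cast_one, mul_zero, zero_mul, mul_one, one_mul, add_zero]
    have h3 : r' + 1 - 1 = r' := by omega
    rw [h3]
    ring

/-- Telescoping bound. -/
lemma telescope_bound (f : ℕ → ℝ) (B : ℝ) (hB : 0 ≤ B) (e : ℕ)
    (h : ∀ n : ℕ, 1 ≤ n → |f (n + 1) - f n| ≤ B * (n : ℝ) ^ e) :
    ∀ n : ℕ, 1 ≤ n → |f n| ≤ |f 1| + B * (n : ℝ) ^ (e + 1) := by
  intro n hn
  induction n with
  | zero => omega
  | succ m ih =>
    rcases Nat.eq_or_lt_of_le hn with h1 | h1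
    · have : m = 0 := by omega
      subst this
      have : (0:ℝ) ≤ B * ((1:ℕ):ℝ) ^ (e+1) := by positivity
      push_cast at this ⊢
      linarith
    · have hm : 1 ≤ m := by omega
      have ihm := ih hm
      have hstep := h m hm
      have habs : |f (m + 1)| ≤ |f m| + B * (m:ℝ) ^ e := by
        have := abs_sub_abs_le_abs_sub (f (m+1)) (f m)
        linarith [abs_sub_abs_le_abs_sub (f (m+1)) (f m)]
      have hkey : (m:ℝ) ^ (e+1) + (m:ℝ) ^ e ≤ ((m:ℝ) + 1) ^ (e+1) := by
        have h4 : ((m:ℝ)) ^ e ≤ ((m:ℝ) + 1) ^ e :=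
          pow_le_pow_left₀ (Nat.cast_nonneg m) (by linarith) e
        have h5 : ((m:ℝ) + 1) ^ (e+1) = ((m:ℝ) + 1) ^ e * ((m:ℝ) + 1) := by ring
        have h6 : (m:ℝ) ^ (e+1) + (m:ℝ) ^ e = (m:ℝ) ^ e * ((m:ℝ) + 1) := by ring
        rw [h5, h6]
        have : (0:ℝ) ≤ (m:ℝ) + 1 := by positivity
        nlinarith [pow_nonneg (Nat.cast_nonneg (α := ℝ) m) e]
      push_cast
      push_cast at ihm
      nlinarith [habs, ihm, hstep]

/-- Main bound on the central moments, by strong induction on `r`. -/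
lemma Cmom_bound (ha : 0 ≤ a) (hx : 0 ≤ x) :
    ∀ r : ℕ, ∃ A : ℝ, 0 < A ∧ ∀ n : ℕ, 1 ≤ n →
      |Cmom a x n r| ≤ A * (n : ℝ) ^ (r / 2) := by
  intro r
  induction r using Nat.strong_induction_on with
  | _ r IH =>
  have hex : ∀ t : ℕ, ∃ A : ℝ, 0 < A ∧ ∀ n : ℕ, 1 ≤ n →
      t < r → |Cmom a x n t| ≤ A * (n : ℝ) ^ (t / 2) := by
    intro t
    by_cases h : t < r
    · obtain ⟨A, hA, hb⟩ := IH t h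
      exact ⟨A, hA, fun n hn _ => hb n hn⟩
    · exact ⟨1, one_pos, fun n hn ht => absurd ht h⟩
  choose A hApos hAb using hex
  set B : ℝ := ∑ t ∈ Finset.range (r - 1),
      (r.choose t : ℝ) * A t * |ggamma x (r - t)| with hB
  have hB0 : 0 ≤ B := by
    apply Finset.sum_nonneg
    intro t _
    have := (hApos t).le
    positivity
  have hdiff : ∀ n : ℕ, 1 ≤ n →
      |Cmom a x (n + 1) r - Cmom a x n r| ≤ B * (n : ℝ) ^ ((r - 2) / 2) := by
    intro n hn
    rw [Cmom_diff ha hx]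
    calc |∑ t ∈ Finset.range (r - 1), (r.choose t : ℝ) * Cmom a x n t * ggamma x (r - t)|
        ≤ ∑ t ∈ Finset.range (r - 1), |(r.choose t : ℝ) * Cmom a x n t * ggamma x (r - t)| :=
          Finset.abs_sum_le_sum_abs _ _
      _ ≤ ∑ t ∈ Finset.range (r - 1),
            (r.choose t : ℝ) * A t * |ggamma x (r - t)| * (n : ℝ) ^ ((r - 2) / 2) := by
          refine Finset.sum_le_sum fun t ht => ?_
          have htr : t < r := by
            have := Finset.mem_range.mp ht; omega
          have hle := hAb t n hn htr
          have hpow : (n : ℝ) ^ (t / 2) ≤ (n : ℝ) ^ ((r - 2) / 2) := by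
            apply pow_le_pow_right₀
            · exact_mod_cast hn
            · have := Finset.mem_range.mp ht; omega
          rw [abs_mul, abs_mul, Nat.abs_cast]
          have h1 : |Cmom a x n t| * |ggamma x (r-t)|
              ≤ (A t * (n:ℝ)^((r-2)/2)) * |ggamma x (r-t)| := by
            apply mul_le_mul_of_nonneg_right _ (abs_nonneg _)
            exact hle.trans (mul_le_mul_of_nonneg_left hpow (hApos t).le)
          calc (r.choose t : ℝ) * |Cmom a x n t| * |ggamma x (r - t)|
              ≤ (r.choose t : ℝ) * ((A t * (n:ℝ)^((r-2)/2)) * |ggamma x (r-t)|) := by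
                rw [mul_assoc]
                exact mul_le_mul_of_nonneg_left h1 (Nat.cast_nonneg _)
            _ = (r.choose t : ℝ) * A t * |ggamma x (r - t)| * (n : ℝ) ^ ((r - 2) / 2) := by
                ring
      _ = B * (n : ℝ) ^ ((r - 2) / 2) := by rw [hB, Finset.sum_mul]
  have htel := telescope_bound (fun n => Cmom a x n r) B hB0 ((r - 2) / 2) hdiff
  refine ⟨|Cmom a x 1 r| + B + 1, by positivity, fun n hn => ?_⟩
  have hn1 : (1:ℝ) ≤ (n:ℝ) := by exact_mod_cast hn
  have hp1 : (1:ℝ) ≤ (n:ℝ) ^ (r / 2) := one_le_pow₀ hn1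
  rcases le_or_gt r 1 with hr | hr
  · have hBz : B = 0 := by
      rw [hB]
      have : r - 1 = 0 := by omega
      rw [this]
      simp
    have := htel n hn
    rw [hBz] at this
    simp only [zero_mul, add_zero] at this
    calc |Cmom a x n r| ≤ |Cmom a x 1 r| := this
      _ ≤ (|Cmom a x 1 r| + 0 + 1) * 1 := by norm_num
      _ ≤ (|Cmom a x 1 r| + B + 1) * (n:ℝ) ^ (r / 2) := by
          rw [hBz]
          apply mul_le_mul_of_nonneg_left hp1 (by positivity)
  · have hee : (r - 2) / 2 + 1 = r / 2 := by omega
    have := htel n hn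
    rw [hee] at this
    have hpow0 : (0:ℝ) ≤ (n:ℝ) ^ (r / 2) := by positivity
    calc |Cmom a x n r| ≤ |Cmom a x 1 r| + B * (n:ℝ) ^ (r/2) := this
      _ ≤ |Cmom a x 1 r| * (n:ℝ)^(r/2) + B * (n:ℝ)^(r/2) + 1 * (n:ℝ)^(r/2) := by
          have h7 : |Cmom a x 1 r| ≤ |Cmom a x 1 r| * (n:ℝ)^(r/2) :=
            le_mul_of_one_le_right (abs_nonneg _) hp1
          nlinarith
      _ = (|Cmom a x 1 r| + B + 1) * (n:ℝ) ^ (r / 2) := by ring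

end W

/-- `μ*_{n,r}^a(x) = O(n^{−⌊(r+1)/2⌋})` as `n → ∞`
(here `(r+1)/2` is the natural-number floor `⌊(r+1)/2⌋`). -/
theorem statement15 (a : ℝ) (ha : 0 ≤ a) (r : ℕ) (x : ℝ) (hx : 0 ≤ x) :
    ∃ C > (0 : ℝ), ∃ N : ℕ, ∀ n ≥ N,
      |muStarMoment a n r x| ≤ C / (n : ℝ) ^ ((r + 1) / 2) := by
  obtain ⟨A, hA, hb⟩ := Cmom_bound ha hx r
  refine ⟨A, hA, 1, fun n hn => ?_⟩
  have hn1 : 1 ≤ n := hn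
  have hn0 : (0:ℝ) < (n:ℝ) := by exact_mod_cast Nat.lt_of_lt_of_le Nat.zero_lt_one hn1
  have hne : ((n:ℝ)) ≠ 0 := hn0.ne'
  have hlink : muStarMoment a n r x = Cmom a x n r * ((n:ℝ)⁻¹) ^ r := by
    rw [muStarMoment, Cmom, ← tsum_mul_right]
    refine tsum_congr fun k => ?_
    have h1 : (k : ℝ) / (n : ℝ) - x = ((k : ℝ) - (n:ℝ) * x) * (n:ℝ)⁻¹ := by
      field_simp
    rw [h1, mul_pow]
    ring
  rw [hlink]
  have hsplit : (n:ℝ) ^ r = (n:ℝ) ^ (r / 2) * (n:ℝ) ^ ((r + 1) / 2) := by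
    rw [← pow_add]
    congr 1
    omega
  have hval : (n:ℝ) ^ (r/2) * ((n:ℝ)⁻¹) ^ r = ((n:ℝ) ^ ((r+1)/2))⁻¹ := by
    rw [inv_pow, hsplit, mul_inv]
    rw [← mul_assoc, mul_inv_cancel₀ (pow_ne_zero _ hne), one_mul]
  have hbnd := hb n hn1
  calc |Cmom a x n r * ((n:ℝ)⁻¹) ^ r| = |Cmom a x n r| * ((n:ℝ)⁻¹) ^ r := by
        rw [abs_mul, abs_pow, abs_of_nonneg (inv_nonneg.mpr hn0.le)]
    _ ≤ A * (n:ℝ) ^ (r/2) * ((n:ℝ)⁻¹) ^ r := by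
        apply mul_le_mul_of_nonneg_right hbnd (by positivity)
    _ = A * ((n:ℝ) ^ (r/2) * ((n:ℝ)⁻¹) ^ r) := by ring
    _ = A / (n:ℝ) ^ ((r+1)/2) := by rw [hval, div_eq_mul_inv]
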